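/- Each Demazure–Whittaker operator T_i maps the subring ℂ[Λ] ⊂ K into itself: for every f ∈ ℂ[Λ], T_i f ∈ ℂ[Λ]. (Theorem 2.4(iii) of 'Hecke Modules from Metaplectic Ice': the representation on 𝒪(T̂_reg(ℂ)) induces an action on 𝒪(T̂(ℂ)); the point is the divisibility of the numerator of T_i f by 1 − z^{α_i∨}, using that ⟨α_i, λ⟩ ∈ ℤ for all λ ∈ Λ.) -/

import Mathlib

/-!
Theorem 2.4 (i) of "Hecke Modules from Metaplectic Ice" (Hecke relations for the
Demazure–Whittaker operators).

Setting: `Λ` is a free abelian group of finite rank containing a reduced crystallographic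
root system `Φ` with simple coroots `α i`, Weyl group `W` generated by the simple
reflections `s i` (acting on `Λ` via `σ`).  `K` is the fraction field of the group algebra
`ℂ[Λ]`: we encode this by a field `K` which is a `ℂ`-algebra together with a homomorphism
`ζ : Λ → Kˣ` (written additively-to-multiplicatively) whose values are linearly independent
over `ℂ` (so `ℂ[Λ] ⊆ K`), and a `W`-action `τ` on `K` by `ℂ`-algebra automorphisms with
`τ w (ζ λ) = ζ (w λ)`.  The Demazure–Whittaker operator is
`T_i f = ((1−v)z^{α_i}/(1−z^{α_i}))·f + ((1−v z^{α_i})/(1−z^{−α_i}))·(s_i·f)`.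
-/

noncomputable section

/-- Alternating composite: `altComp f g m = ⋯ ∘ g ∘ f` with `m` factors, rightmost `f`. -/
def altComp {E : Type*} [AddCommGroup E] [Module ℂ E] (f g : E →ₗ[ℂ] E) : ℕ → (E →ₗ[ℂ] E)
  | 0 => LinearMap.id
  | m + 1 => altComp g f m ∘ₗ f

/-- The Demazure–Whittaker operator
`T_i f = ((1−v)z^{α_i}/(1−z^{α_i}))·f + ((1−v z^{α_i})/(1−z^{−α_i}))·(s_i·f)`. -/
def demWhit {Λ W K : Type*} [AddCommGroup Λ] [Group W] [Field K] [Algebra ℂ K]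
    {r : ℕ} (ζ : Λ → K) (τ : W →* (K ≃ₐ[ℂ] K)) (s : Fin r → W) (α : Fin r → Λ)
    (v : ℂ) (i : Fin r) : K →ₗ[ℂ] K where
  toFun f := ((1 - algebraMap ℂ K v) * ζ (α i) / (1 - ζ (α i))) * f
      + ((1 - algebraMap ℂ K v * ζ (α i)) / (1 - ζ (-α i))) * τ (s i) f
  map_add' f g := by simp only [map_add]; ring
  map_smul' c f := by
    simp only [Algebra.smul_def, map_mul, AlgEquiv.commutes, RingHom.id_apply]
    ring

/-- The group structure on `A ≃+ A` (composition), as `AddAut.group` provided in older Mathlib. -/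
instance addEquivSelfGroupOld (A : Type*) [Add A] : Group (A ≃+ A) :=
  inferInstanceAs (Group (Multiplicative (AddAut A)))

/-- **Theorem 2.4 (iii) of "Hecke Modules from Metaplectic Ice".**
Each Demazure–Whittaker operator `T_i` maps the subring `ℂ[Λ] ⊆ K` (the `ℂ`-span of the
`z^λ`, i.e. `𝒪(T̂(ℂ))`) into itself: the numerator of `T_i f` is divisible by
`1 − z^{α_i∨}`, using that `⟨α_i, λ⟩ ∈ ℤ` for all `λ ∈ Λ` (crystallographic). -/
theorem demWhit_preserves_groupAlgebra
    -- Λ: free abelian group of finite rank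
    {Λ : Type*} [AddCommGroup Λ] [Module.Free ℤ Λ] [Module.Finite ℤ Λ]
    -- W: finite Weyl group acting on Λ
    {W : Type*} [Group W] [Fintype W] {r : ℕ}
    (σ : W →* Λ ≃+ Λ) (s : Fin r → W) (α : Fin r → Λ) (pair : Fin r → Λ →+ ℤ)
    -- Φ: the reduced crystallographic root system inside Λ
    (Φ : Set Λ) (hΦfin : Φ.Finite) (hΦneg : ∀ μ ∈ Φ, -μ ∈ Φ)
    (hΦW : ∀ (w : W), ∀ μ ∈ Φ, σ w μ ∈ Φ)
    (hΦred : ∀ μ ∈ Φ, (2 : ℤ) • μ ∉ Φ)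
    (hα : ∀ i, α i ∈ Φ) (hpair : ∀ i, pair i (α i) = 2)
    (hrefl : ∀ (i : Fin r) (μ : Λ), σ (s i) μ = μ - pair i μ • α i)
    (hs2 : ∀ i, s i * s i = 1)
    (hgen : Subgroup.closure (Set.range s) = ⊤)
    -- K ⊇ ℂ[Λ]: the fraction field, with basis elements ζ λ = z^λ
    {K : Type*} [Field K] [Algebra ℂ K]
    (ζ : Λ → K) (hζ0 : ζ 0 = 1) (hζadd : ∀ μ ν, ζ (μ + ν) = ζ μ * ζ ν)
    (hζindep : LinearIndependent ℂ ζ)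
    -- the W-action on K by ℂ-algebra automorphisms, with w·z^λ = z^{wλ}
    (τ : W →* (K ≃ₐ[ℂ] K)) (hτ : ∀ (w : W) (μ : Λ), τ w (ζ μ) = ζ (σ w μ))
    (v : ℂ) :
    -- T_i maps the subring ℂ[Λ] = span_ℂ {z^λ} of K into itself
    ∀ i : Fin r, ∀ f ∈ Submodule.span ℂ (Set.range ζ),
      demWhit ζ τ s α v i f ∈ Submodule.span ℂ (Set.range ζ) := by
  classical
  intro i f hf
  set S := Submodule.span ℂ (Set.range ζ) with hS
  -- S is closed under multiplication
  have hmul : ∀ {x y : K}, x ∈ S → y ∈ S → x * y ∈ S := by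
    have h : S * S ≤ S := by
      rw [hS, Submodule.span_mul_span]
      refine Submodule.span_le.mpr ?_
      rintro _ ⟨_, ⟨μ, rfl⟩, _, ⟨ν, rfl⟩, rfl⟩
      exact Submodule.subset_span ⟨μ + ν, hζadd μ ν⟩
    intro x y hx hy; exact h (Submodule.mul_mem_mul hx hy)
  have hζS : ∀ μ : Λ, ζ μ ∈ S := fun μ => Submodule.subset_span ⟨μ, rfl⟩
  -- basic facts about ζ and a := ζ (α i)
  have hinv : ∀ μ : Λ, ζ μ * ζ (-μ) = 1 := by
    intro μ; rw [← hζadd, add_neg_cancel, hζ0]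
  have hζne : ∀ μ : Λ, ζ μ ≠ 0 := by
    intro μ hμ
    have := hinv μ; rw [hμ, zero_mul] at this; exact zero_ne_one this
  have hαne : α i ≠ 0 := by
    intro h
    have h2 := hpair i
    rw [h, map_zero] at h2
    exact two_ne_zero h2.symm
  have hane1 : ζ (α i) ≠ 1 := by
    intro h
    exact hαne (hζindep.injective (h.trans hζ0.symm))
  have hden1 : (1 : K) - ζ (α i) ≠ 0 := sub_ne_zero.mpr (fun h => hane1 h.symm)
  have hnegden : (1 : K) - ζ (-α i) = -(ζ (-α i)) * (1 - ζ (α i)) := by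
    have h := hinv (α i)
    ring_nf
    linear_combination -h
  have hden2 : (1 : K) - ζ (-α i) ≠ 0 := by
    rw [hnegden]
    exact mul_ne_zero (neg_ne_zero.mpr (hζne _)) hden1
  -- divisibility: for each m, (1 - ζ(α i)) divides 1 - ζ(m • α i) inside S
  have hq : ∀ m : ℤ, ∃ q ∈ S, (1 - ζ (α i)) * q = 1 - ζ (m • α i) := by
    intro m
    induction m using Int.induction_on with
    | zero => exact ⟨0, S.zero_mem, by simp [hζ0]⟩
    | succ n ih =>
      obtain ⟨q, hqS, hqe⟩ := ih
      refine ⟨q + ζ ((n : ℤ) • α i), S.add_mem hqS (hζS _), ?_⟩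
      have hstep : ((n : ℤ) + 1) • α i = (n : ℤ) • α i + α i := by
        rw [add_smul, one_smul]
      rw [hstep, hζadd]
      linear_combination hqe
    | pred n ih =>
      obtain ⟨q, hqS, hqe⟩ := ih
      refine ⟨q - ζ ((-(n : ℤ) - 1) • α i), S.sub_mem hqS (hζS _), ?_⟩
      have hstep : (-(n : ℤ)) • α i = (-(n : ℤ) - 1) • α i + α i := by
        rw [sub_smul, one_smul]; abel
      rw [hstep, hζadd] at hqe
      linear_combination hqe
  -- main reduction: span induction
  induction hf using Submodule.span_induction with
  | zero => rw [map_zero]; exact S.zero_mem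
  | add x y hx hy ihx ihy => rw [map_add]; exact S.add_mem ihx ihy
  | smul c x hx ih => rw [map_smul]; exact S.smul_mem c ih
  | mem x hx =>
    obtain ⟨μ, rfl⟩ := hx
    set n : ℤ := pair i μ with hn
    obtain ⟨q1, hq1S, hq1⟩ := hq n
    obtain ⟨q2, hq2S, hq2⟩ := hq (n - 1)
    have hτμ : τ (s i) (ζ μ) = ζ (μ - n • α i) := by rw [hτ, hrefl]
    have hsplit : ζ μ = ζ (μ - n • α i) * ζ (n • α i) := by
      rw [← hζadd, sub_add_cancel]
    have hstep : ζ (α i) * ζ ((n - 1) • α i) = ζ (n • α i) := by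
      rw [← hζadd]
      congr 1
      rw [sub_smul, one_smul]
      abel
    have hA : (1 - ζ (α i)) * (1 - ζ (α i))⁻¹ = 1 := mul_inv_cancel₀ hden1
    have hB0 : (-ζ (α i) * (1 - ζ (α i))⁻¹) * (1 - ζ (-α i)) = 1 := by
      rw [hnegden]
      linear_combination ζ (α i) * ζ (-α i) * hA + hinv (α i)
    have hB : (1 - ζ (-α i))⁻¹ = -ζ (α i) * (1 - ζ (α i))⁻¹ :=
      (eq_inv_of_mul_eq_one_left hB0).symm
    have key : demWhit ζ τ s α v i (ζ μ)
        = ζ (α i) * ζ (μ - n • α i)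
          * (-q1 + algebraMap ℂ K v * ζ (α i) * q2) := by
      show ((1 - algebraMap ℂ K v) * ζ (α i) / (1 - ζ (α i))) * ζ μ
          + ((1 - algebraMap ℂ K v * ζ (α i)) / (1 - ζ (-α i))) * τ (s i) (ζ μ)
          = _
      rw [hτμ, div_eq_mul_inv, div_eq_mul_inv, hB]
      linear_combination (1 - algebraMap ℂ K v) * ζ (α i) * (1 - ζ (α i))⁻¹ * hsplit
        + (-(ζ (α i) * ζ (μ - n • α i) * q1)
            + algebraMap ℂ K v * ζ (α i) ^ 2 * ζ (μ - n • α i) * q2) * hA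
        + ζ (α i) * ζ (μ - n • α i) * (1 - ζ (α i))⁻¹ * hq1
        - algebraMap ℂ K v * ζ (α i) ^ 2 * ζ (μ - n • α i) * (1 - ζ (α i))⁻¹ * hq2
        + algebraMap ℂ K v * ζ (α i) * (1 - ζ (α i))⁻¹ * ζ (μ - n • α i) * hstep
    rw [key]
    refine hmul (hmul (hζS _) (hζS _)) ?_
    refine S.add_mem (S.neg_mem hq1S) ?_
    have : algebraMap ℂ K v * ζ (α i) * q2 = v • (ζ (α i) * q2) := by
      rw [Algebra.smul_def, mul_assoc]
    rw [this]
    exact S.smul_mem v (hmul (hζS _) hq2S)
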